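/- arXiv:0908.0309 — 2 statements merged into one kernel-verified Lean document; each statement's English description precedes it below -/
import Mathlib

section
/- Let $g \ge 2$ and define $h_g$ by $h_g(1) = 0$, $h_g(n) = h_g(n-1) + (n^3-n^2) + \frac{n^2}{4}(g-1) + \frac{n}{2} + \frac{n^2 g^2}{4} + \frac{1}{4}$. Then for all positive integers $s, t$ with $s + t = n$: $h_g(s) + h_g(t) + stg - 1 \le h_g(n)$. -/
/-- The increment `Λ(n) = (n³ - n²) + n²(g-1)/4 + n/2 + n²g²/4 + 1/4`. -/
def Lam (g n : ℚ) : ℚ :=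
  (n ^ 3 - n ^ 2) + n ^ 2 / 4 * (g - 1) + n / 2 + n ^ 2 * g ^ 2 / 4 + 1 / 4

/-- The function `h_g : ℕ → ℚ` defined recursively by `h_g(1) = 0` and
`h_g(n) = h_g(n-1) + Λ(n)` for `n ≥ 2`. -/
def hg (g : ℚ) : ℕ → ℚ
  | 0 => 0
  | 1 => 0
  | (n + 2) => hg g (n + 1) + Lam g ((n : ℚ) + 2)

/-- Closed form for `hg`. -/
def Hcf (g n : ℚ) : ℚ :=
  n ^ 2 * (n + 1) ^ 2 / 4 + (g ^ 2 + g - 5) / 4 * (n * (n + 1) * (2 * n + 1)) / 6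
    + n * (n + 1) / 4 + n / 4 - (g ^ 2 + g - 5) / 4 - 7 / 4

lemma hg_eq (g : ℚ) : ∀ n : ℕ, hg g (n + 1) = Hcf g ((n : ℚ) + 1) := by
  intro n
  induction n with
  | zero => simp [hg, Hcf]; ring
  | succ k ih =>
    show hg g (k + 1) + Lam g ((k : ℚ) + 2) = _
    rw [ih]
    unfold Hcf Lam
    push_cast
    ring

/-- Let `g ≥ 2` be an integer.  For all positive integers `s, t` with `s + t = n`,
`h_g(s) + h_g(t) + s t g - 1 ≤ h_g(n)`. -/
theorem stmt_14 (g : ℤ) (hgen : 2 ≤ g) (s t n : ℕ) (hs : 1 ≤ s) (ht : 1 ≤ t)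
    (hst : s + t = n) :
    hg (g : ℚ) s + hg (g : ℚ) t + (s : ℚ) * t * g - 1 ≤ hg (g : ℚ) n := by
  obtain ⟨a, rfl⟩ : ∃ a, s = a + 1 := ⟨s - 1, (Nat.succ_pred_eq_of_pos hs).symm⟩
  obtain ⟨b, rfl⟩ : ∃ b, t = b + 1 := ⟨t - 1, (Nat.succ_pred_eq_of_pos ht).symm⟩
  subst hst
  have hn : a + 1 + (b + 1) = (a + b + 1) + 1 := by ring
  rw [hn, hg_eq, hg_eq, hg_eq]
  have hg2 : (2 : ℚ) ≤ (g : ℚ) := by exact_mod_cast hgen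
  have ha : (0 : ℚ) ≤ (a : ℚ) := Nat.cast_nonneg a
  have hb : (0 : ℚ) ≤ (b : ℚ) := Nat.cast_nonneg b
  unfold Hcf
  push_cast
  nlinarith [mul_nonneg ha hb, mul_nonneg (mul_nonneg ha hb) (sub_nonneg.2 hg2),
    mul_nonneg (mul_nonneg ha ha) hb, mul_nonneg (mul_nonneg ha hb) hb,
    mul_nonneg (mul_nonneg (mul_nonneg ha hb) (sub_nonneg.2 hg2)) (sub_nonneg.2 hg2),
    mul_nonneg (mul_nonneg (mul_nonneg ha ha) hb) (sub_nonneg.2 hg2),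
    mul_nonneg (mul_nonneg (mul_nonneg ha hb) hb) (sub_nonneg.2 hg2),
    mul_nonneg (mul_nonneg (mul_nonneg ha ha) hb) hb,
    sq_nonneg ((g:ℚ) - 2), mul_nonneg ha (sub_nonneg.2 hg2), mul_nonneg hb (sub_nonneg.2 hg2)]
end

section
/- Every subgroup of the symmetric group $S_n$ (for $n \ge 2$) can be generated by at most $n - 1$ elements. -/
open MulAction Subgroup

lemma my_ext_closure {G Q : Type*} [Group G] [Group Q] (f : G →* Q) (A B : Set G)
    (hA : ∀ g : G, ∃ c ∈ Subgroup.closure A, f c = f g)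
    (hB : f.ker ≤ Subgroup.closure B) :
    Subgroup.closure (A ∪ B) = ⊤ := by
  rw [eq_top_iff]
  intro g _
  obtain ⟨c, hc, hfc⟩ := hA g
  have h1 : g * c⁻¹ ∈ Subgroup.closure (A ∪ B) := by
    apply Subgroup.closure_mono Set.subset_union_right
    apply hB
    simp [MonoidHom.mem_ker, hfc]
  have h2 : c ∈ Subgroup.closure (A ∪ B) :=
    Subgroup.closure_mono Set.subset_union_left hc
  simpa using mul_mem h1 h2

lemma my_card_option {β : Type*} [Finite β] : Nat.card (Option β) = Nat.card β + 1 := by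
  have := Fintype.ofFinite β
  simp [Nat.card_eq_fintype_card]

lemma my_bot (α : Type) [Finite α] (H : Subgroup (Equiv.Perm α)) (hbot : H = ⊥) :
    ∃ S : Finset (Equiv.Perm α), (S : Set (Equiv.Perm α)) ⊆ (H : Set (Equiv.Perm α)) ∧
      Subgroup.closure (S : Set (Equiv.Perm α)) = H ∧
      S.card + Nat.card (orbitRel.Quotient H α) ≤ Nat.card α := by
  refine ⟨∅, by simp, by simp [hbot], ?_⟩
  have : Nat.card (orbitRel.Quotient H α) ≤ Nat.card α :=
    Nat.card_le_card_of_surjective (Quotient.mk'' : α → orbitRel.Quotient H α)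
      (fun q => Quotient.inductionOn' q fun x => ⟨x, rfl⟩)
  simpa using this

lemma my_key : ∀ (n : ℕ) (α : Type) [Finite α], Nat.card α ≤ n →
    ∀ (m : ℕ) (H : Subgroup (Equiv.Perm α)), Nat.card H ≤ m →
    ∃ S : Finset (Equiv.Perm α), (S : Set (Equiv.Perm α)) ⊆ (H : Set (Equiv.Perm α)) ∧
      Subgroup.closure (S : Set (Equiv.Perm α)) = H ∧
      S.card + Nat.card (orbitRel.Quotient H α) ≤ Nat.card α := by
  intro n
  induction n with
  | zero =>
    intro α _ hα m H _
    have hemp : IsEmpty α := by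
      rcases Nat.card_eq_zero.mp (Nat.le_zero.mp hα) with h | h
      · exact h
      · exact absurd h (not_infinite_iff_finite.mpr ‹_›)
    apply my_bot
    rw [eq_bot_iff]
    intro x hx
    rw [Subgroup.mem_bot]
    exact Equiv.Perm.ext fun y => (hemp.false y).elim
  | succ n ihn =>
    intro α _ hα m
    induction m with
    | zero =>
      intro H hH
      have : 0 < Nat.card H := Nat.card_pos
      omega
    | succ m ihm =>
      intro H hH
      classical
      by_cases hbot : H = ⊥
      · exact my_bot α H hbot
      · have hne : Nonempty α := by
          by_contra h
          have he : IsEmpty α := not_nonempty_iff.mp h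
          apply hbot
          rw [eq_bot_iff]
          intro x hx
          rw [Subgroup.mem_bot]
          exact Equiv.Perm.ext fun y => (he.false y).elim
        by_cases htrans : ∀ a b : α, b ∈ orbit H a
        · -- TRANSITIVE CASE
          obtain ⟨a⟩ := hne
          have hmove : ∃ h : H, (h : Equiv.Perm α) a ≠ a := by
            by_contra hfix
            push_neg at hfix
            apply hbot
            rw [eq_bot_iff]
            intro p hp
            rw [Subgroup.mem_bot]
            ext x
            obtain ⟨k, hk⟩ := MulAction.mem_orbit_iff.mp (htrans a x)
            have hk' : (k : Equiv.Perm α) a = x := hk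
            have h2 : x = a := by rw [← hk', hfix k]
            rw [h2]
            simpa using hfix ⟨p, hp⟩
          have hPH : H ⊓ MulAction.stabilizer (Equiv.Perm α) a < H := by
            refine lt_of_le_of_ne inf_le_left ?_
            intro hPe
            obtain ⟨h, hh⟩ := hmove
            exact hh (hPe.ge h.2).2
          obtain ⟨M, ⟨hPM, hMH⟩, hmax⟩ :=
            Set.Finite.exists_maximalFor id
              {M : Subgroup (Equiv.Perm α) | H ⊓ MulAction.stabilizer (Equiv.Perm α) a ≤ M ∧ M < H}
              (Set.toFinite _) ⟨_, le_refl _, hPH⟩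
          simp only [id] at hmax
          obtain ⟨g, hgH, hgM⟩ := SetLike.exists_of_lt hMH
          have hgcl : Subgroup.closure {g} ≤ H :=
            (Subgroup.closure_le H).mpr (Set.singleton_subset_iff.mpr hgH)
          have hsup : M ⊔ Subgroup.closure {g} = H := by
            rcases lt_or_eq_of_le (sup_le hMH.le hgcl) with hlt | he
            · exfalso
              have heq := le_antisymm le_sup_left (@hmax (M ⊔ Subgroup.closure {g}) ⟨le_trans hPM le_sup_left, hlt⟩ le_sup_left)
              apply hgM
              rw [heq]
              exact (le_sup_right : Subgroup.closure {g} ≤ M ⊔ Subgroup.closure {g})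
                (Subgroup.subset_closure rfl)
            · exact he
          have hMint : ∃ b : α, b ∉ orbit M a := by
            by_contra hMt
            push_neg at hMt
            apply hMH.ne
            apply le_antisymm hMH.le
            intro h hh
            obtain ⟨k, hk⟩ := MulAction.mem_orbit_iff.mp (hMt (h a))
            have hk' : (k : Equiv.Perm α) a = h a := hk
            have hmem : (k : Equiv.Perm α)⁻¹ * h ∈ H ⊓ MulAction.stabilizer (Equiv.Perm α) a := by
              refine Subgroup.mem_inf.mpr ⟨mul_mem (inv_mem (hMH.le k.2)) hh, ?_⟩
              rw [MulAction.mem_stabilizer_iff]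
              show ((k : Equiv.Perm α)⁻¹ * h) a = a
              rw [Equiv.Perm.mul_apply, ← hk']
              simp
            have hmem2 : (k : Equiv.Perm α)⁻¹ * h ∈ M := hPM hmem
            have hfin := mul_mem k.2 hmem2
            simpa using hfin
          obtain ⟨b, hb⟩ := hMint
          have hMcard : Nat.card M ≤ m := by
            have h1 : Nat.card M < Nat.card H :=
              Set.Finite.card_lt_card (Set.toFinite (H : Set (Equiv.Perm α)))
                (SetLike.coe_ssubset_coe.mpr hMH)
            omega
          obtain ⟨S₀, hS₀H, hS₀cl, hS₀c⟩ := ihm M hMcard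
          have ht2 : 2 ≤ Nat.card (orbitRel.Quotient M α) := by
            have hnt : Nontrivial (orbitRel.Quotient M α) := by
              refine ⟨Quotient.mk'' a, Quotient.mk'' b, fun he => ?_⟩
              rw [Quotient.eq'', MulAction.orbitRel_apply] at he
              refine hb ?_
              rw [MulAction.orbit_eq_iff.mpr he]
              exact MulAction.mem_orbit_self b
            have := Fintype.ofFinite (orbitRel.Quotient M α)
            rw [Nat.card_eq_fintype_card]
            exact Fintype.one_lt_card
          have ht1 : Nat.card (orbitRel.Quotient H α) = 1 := by
            rw [Nat.card_eq_one_iff_unique]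
            refine ⟨⟨fun q q' => ?_⟩, ⟨Quotient.mk'' a⟩⟩
            induction q using Quotient.inductionOn'
            induction q' using Quotient.inductionOn'
            rw [Quotient.eq'', MulAction.orbitRel_apply]
            exact htrans _ _
          refine ⟨insert g S₀, ?_, ?_, ?_⟩
          · intro x hx
            simp only [Finset.coe_insert, Set.mem_insert_iff] at hx
            rcases hx with rfl | hx
            · exact hgH
            · exact hMH.le (hS₀cl ▸ Subgroup.subset_closure hx)
          · rw [Finset.coe_insert, Set.insert_eq, Subgroup.closure_union, hS₀cl, sup_comm]
            exact hsup
          · have hci := Finset.card_insert_le g S₀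
            omega
        · -- INTRANSITIVE CASE
          push_neg at htrans
          obtain ⟨a, b, hab⟩ := htrans
          have haΔ : a ∈ orbit H a := MulAction.mem_orbit_self a
          -- invariance of the orbit
          have hinv : ∀ (h : H) (x : α), x ∈ orbit H a ↔ (h : Equiv.Perm α) x ∈ orbit H a := by
            intro h x
            constructor
            · intro hx
              obtain ⟨k, hk⟩ := MulAction.mem_orbit_iff.mp hx
              exact MulAction.mem_orbit_iff.mpr ⟨h * k, by rw [mul_smul, hk]; rfl⟩
            · intro hx
              obtain ⟨k, hk⟩ := MulAction.mem_orbit_iff.mp hx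
              exact MulAction.mem_orbit_iff.mpr ⟨h⁻¹ * k, by
                rw [mul_smul, hk]
                show (h : Equiv.Perm α)⁻¹ ((h : Equiv.Perm α) x) = x
                simp⟩
          have hinvc : ∀ (h : H) (x : α),
              x ∈ (orbit H a)ᶜ ↔ (h : Equiv.Perm α) x ∈ (orbit H a)ᶜ := by
            intro h x
            simp only [Set.mem_compl_iff, not_iff_not]
            exact hinv h x
          -- the two restriction homomorphisms
          let φ : H →* Equiv.Perm (orbit H a) :=
            MonoidHom.mk' (fun h => Equiv.Perm.subtypePerm (h : Equiv.Perm α) (fun x => (hinv h x).symm))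
              (fun h k => by
                ext x
                simp [Equiv.Perm.subtypePerm_apply, Equiv.Perm.mul_apply]; rfl)
          let ψ : H →* Equiv.Perm ((orbit H a : Set α)ᶜ : Set α) :=
            MonoidHom.mk' (fun h => Equiv.Perm.subtypePerm (h : Equiv.Perm α) (fun x => (hinvc h x).symm))
              (fun h k => by
                ext x
                simp [Equiv.Perm.subtypePerm_apply, Equiv.Perm.mul_apply]; rfl)
          have hφ_apply : ∀ (h : H) (x : (orbit H a : Set α)),
              ((φ h x : (orbit H a : Set α)) : α) = (h : Equiv.Perm α) x := fun _ _ => rfl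
          have hψ_apply : ∀ (h : H) (x : ((orbit H a : Set α)ᶜ : Set α)),
              ((ψ h x : ((orbit H a : Set α)ᶜ : Set α)) : α) = (h : Equiv.Perm α) x :=
            fun _ _ => rfl
          -- cardinalities
          have hcardΔ : Nat.card (orbit H a : Set α) ≤ n := by
            have h1 : Nat.card (orbit H a : Set α) < Nat.card (Set.univ : Set α) :=
              Set.Finite.card_lt_card (Set.toFinite _)
                (Set.ssubset_univ_iff.mpr (fun h => hab (h ▸ Set.mem_univ b)))
            have h2 : Nat.card (Set.univ : Set α) = Nat.card α :=
              Nat.card_congr (Equiv.Set.univ α)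
            omega
          have hcardΔc : Nat.card ((orbit H a : Set α)ᶜ : Set α) ≤ n := by
            have h1 : Nat.card ((orbit H a : Set α)ᶜ : Set α) < Nat.card (Set.univ : Set α) :=
              Set.Finite.card_lt_card (Set.toFinite _)
                (Set.ssubset_univ_iff.mpr (fun h => by
                  have : a ∈ (orbit H a)ᶜ := by rw [h]; trivial
                  exact this haΔ))
            have h2 : Nat.card (Set.univ : Set α) = Nat.card α :=
              Nat.card_congr (Equiv.Set.univ α)
            omega
          -- apply the induction hypothesis on the orbit and its complement
          obtain ⟨SI, hSIsub, hSIcl, hSIc⟩ :=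
            ihn (orbit H a : Set α) hcardΔ (Nat.card φ.range) φ.range le_rfl
          obtain ⟨SK, hSKsub, hSKcl, hSKc⟩ :=
            ihn ((orbit H a : Set α)ᶜ : Set α) hcardΔc
              (Nat.card (Subgroup.map ψ φ.ker)) (Subgroup.map ψ φ.ker) le_rfl
          -- lift the generators
          have hfI : ∀ s ∈ SI, ∃ h : H, φ h = s := by
            intro s hs
            exact MonoidHom.mem_range.mp (hSIsub hs)
          have hfK : ∀ s ∈ SK, ∃ h : H, h ∈ φ.ker ∧ ψ h = s := by
            intro s hs
            exact Subgroup.mem_map.mp (hSKsub hs)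
          let TI : Finset H := SI.attach.image fun s => (hfI s.1 s.2).choose
          let TK : Finset H := SK.attach.image fun s => (hfK s.1 s.2).choose
          have hTI_img : (SI : Set (Equiv.Perm (orbit H a : Set α))) ⊆ φ '' TI := by
            intro s hs
            exact ⟨(hfI s hs).choose,
              Finset.mem_image.mpr ⟨⟨s, hs⟩, Finset.mem_attach _ _, rfl⟩,
              (hfI s hs).choose_spec⟩
          have hTK_img : (SK : Set (Equiv.Perm ((orbit H a : Set α)ᶜ : Set α))) ⊆ ψ '' TK := by
            intro s hs
            exact ⟨(hfK s hs).choose,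
              Finset.mem_image.mpr ⟨⟨s, hs⟩, Finset.mem_attach _ _, rfl⟩,
              (hfK s hs).choose_spec.2⟩
          have hTK_ker : (TK : Set H) ⊆ φ.ker := by
            intro t ht
            obtain ⟨s, _, rfl⟩ := Finset.mem_image.mp ht
            exact (hfK s.1 s.2).choose_spec.1
          -- characterization of the kernels
          have hkerφ : ∀ h : H, h ∈ φ.ker → ∀ x : α, x ∈ orbit H a →
              (h : Equiv.Perm α) x = x := by
            intro h hk x hx
            have h1 : φ h = 1 := hk
            have h2 := Equiv.ext_iff.mp h1 ⟨x, hx⟩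
            simpa [Subtype.ext_iff, hφ_apply] using h2
          have hkerψ : ∀ h : H, ψ h = 1 → ∀ x : α, x ∉ orbit H a →
              (h : Equiv.Perm α) x = x := by
            intro h hk x hx
            have h2 := Equiv.ext_iff.mp hk ⟨x, hx⟩
            simpa [Subtype.ext_iff, hψ_apply] using h2
          -- the closure of TI ∪ TK is everything
          have hTtop : Subgroup.closure ((TI : Set H) ∪ (TK : Set H)) = ⊤ := by
            apply my_ext_closure φ
            · intro g
              have h1 : φ g ∈ φ.range := ⟨g, rfl⟩
              rw [← hSIcl] at h1
              have h2 : Subgroup.closure (SI : Set _) ≤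
                  Subgroup.map φ (Subgroup.closure (TI : Set H)) := by
                rw [MonoidHom.map_closure]
                exact Subgroup.closure_mono hTI_img
              obtain ⟨c, hc, hfc⟩ := Subgroup.mem_map.mp (h2 h1)
              exact ⟨c, hc, hfc⟩
            · intro k hk
              have h1 : ψ k ∈ Subgroup.map ψ φ.ker := ⟨k, hk, rfl⟩
              rw [← hSKcl] at h1
              have h2 : Subgroup.closure (SK : Set _) ≤
                  Subgroup.map ψ (Subgroup.closure (TK : Set H)) := by
                rw [MonoidHom.map_closure]
                exact Subgroup.closure_mono hTK_img
              obtain ⟨c, hc, hfc⟩ := Subgroup.mem_map.mp (h2 h1)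
              have hcker : c ∈ φ.ker := (Subgroup.closure_le φ.ker).mpr hTK_ker hc
              have hkc : k = c := by
                have hkerm : k * c⁻¹ ∈ φ.ker := mul_mem hk (inv_mem hcker)
                have hψ1 : ψ (k * c⁻¹) = 1 := by
                  rw [map_mul, map_inv, hfc]
                  simp
                have hperm : ((k * c⁻¹ : H) : Equiv.Perm α) = 1 := by
                  ext x
                  by_cases hx : x ∈ orbit H a
                  · simpa using hkerφ _ hkerm x hx
                  · simpa using hkerψ _ hψ1 x hx
                have : (k * c⁻¹ : H) = 1 := Subtype.ext hperm
                have := mul_eq_one_iff_eq_inv.mp this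
                simpa using this
              rw [hkc]
              exact hc
          -- orbit counting
          have htle : Nat.card (orbitRel.Quotient H α) ≤
              Nat.card (orbitRel.Quotient (Subgroup.map ψ φ.ker)
                ((orbit H a : Set α)ᶜ : Set α)) + 1 := by
            have hwd : ∀ (x y : ((orbit H a : Set α)ᶜ : Set α)),
                (MulAction.orbitRel (Subgroup.map ψ φ.ker) ((orbit H a : Set α)ᶜ : Set α)) x y →
                (MulAction.orbitRel H α) (x : α) (y : α) := by
              intro x y hxy
              rw [MulAction.orbitRel_apply] at hxy ⊢
              obtain ⟨k, hk⟩ := MulAction.mem_orbit_iff.mp hxy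
              obtain ⟨h, hhker, hhk⟩ := Subgroup.mem_map.mp k.2
              refine MulAction.mem_orbit_iff.mpr ⟨h, ?_⟩
              show (h : Equiv.Perm α) (y : α) = (x : α)
              have h4 : (((k : Equiv.Perm ((orbit H a : Set α)ᶜ : Set α)) y :
                  ((orbit H a : Set α)ᶜ : Set α)) : α) = (x : α) :=
                congrArg Subtype.val hk
              rw [← hhk] at h4
              rw [← h4]
              exact (hψ_apply h y).symm
            let F : Option (orbitRel.Quotient (Subgroup.map ψ φ.ker)
                ((orbit H a : Set α)ᶜ : Set α)) → orbitRel.Quotient H α :=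
              Option.elim' (Quotient.mk'' a) (Quotient.map' Subtype.val hwd)
            have hFsurj : Function.Surjective F := by
              intro q
              induction q using Quotient.inductionOn' with
              | h z =>
                by_cases hz : z ∈ orbit H a
                · refine ⟨none, ?_⟩
                  show Quotient.mk'' a = Quotient.mk'' z
                  rw [Quotient.eq'', MulAction.orbitRel_apply]
                  rw [MulAction.orbit_eq_iff.mpr hz]
                  exact MulAction.mem_orbit_self a
                · exact ⟨some (Quotient.mk'' ⟨z, hz⟩), rfl⟩
            have hfin : Finite (orbitRel.Quotient (Subgroup.map ψ φ.ker)
                ((orbit H a : Set α)ᶜ : Set α)) := Quotient.finite _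
            have hfin2 : Finite (Option (orbitRel.Quotient (Subgroup.map ψ φ.ker)
                ((orbit H a : Set α)ᶜ : Set α))) := by
              have := Fintype.ofFinite (orbitRel.Quotient (Subgroup.map ψ φ.ker)
                ((orbit H a : Set α)ᶜ : Set α))
              infer_instance
            calc Nat.card (orbitRel.Quotient H α) ≤
                Nat.card (Option (orbitRel.Quotient (Subgroup.map ψ φ.ker)
                  ((orbit H a : Set α)ᶜ : Set α))) :=
                  Nat.card_le_card_of_surjective F hFsurj
              _ = _ := my_card_option
          -- assemble the generating set
          refine ⟨(TI ∪ TK).image (Subtype.val : H → Equiv.Perm α), ?_, ?_, ?_⟩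
          · intro x hx
            obtain ⟨t, _, rfl⟩ := Finset.mem_image.mp hx
            exact t.property
          · rw [Finset.coe_image, Finset.coe_union]
            have heq : (Subtype.val '' ((TI : Set H) ∪ (TK : Set H))) =
                ⇑H.subtype '' ((TI : Set H) ∪ (TK : Set H)) := rfl
            rw [heq, ← MonoidHom.map_closure, hTtop, ← MonoidHom.range_eq_map]
            exact Subgroup.range_subtype H
          · have hc1 : ((TI ∪ TK).image (Subtype.val : H → Equiv.Perm α)).card ≤
                SI.card + SK.card := by
              calc ((TI ∪ TK).image (Subtype.val : H → Equiv.Perm α)).card ≤ (TI ∪ TK).card :=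
                    Finset.card_image_le
                _ ≤ TI.card + TK.card := Finset.card_union_le _ _
                _ ≤ SI.card + SK.card := by
                    gcongr
                    · exact le_trans Finset.card_image_le (by simp)
                    · exact le_trans Finset.card_image_le (by simp)
            have hq1 : 1 ≤ Nat.card (orbitRel.Quotient φ.range (orbit H a : Set α)) := by
              have : Nonempty (orbitRel.Quotient φ.range (orbit H a : Set α)) :=
                ⟨Quotient.mk'' ⟨a, haΔ⟩⟩
              exact Nat.card_pos
            have hsum : Nat.card (orbit H a : Set α) +
                Nat.card ((orbit H a : Set α)ᶜ : Set α) = Nat.card α := by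
              rw [Nat.card_coe_set_eq, Nat.card_coe_set_eq]
              exact Set.ncard_add_ncard_compl _
            omega

/-- Every subgroup of the symmetric group `Sₙ` (`n ≥ 2`) can be generated by at most
`n - 1` elements. -/
theorem stmt_18 (n : ℕ) (hn : 2 ≤ n) (H : Subgroup (Equiv.Perm (Fin n))) :
    ∃ S : Finset (Equiv.Perm (Fin n)), (S : Set (Equiv.Perm (Fin n))) ⊆ H ∧
      Subgroup.closure (S : Set (Equiv.Perm (Fin n))) = H ∧ S.card ≤ n - 1 := by
  obtain ⟨S, h1, h2, h3⟩ := my_key n (Fin n) (by simp) (Nat.card H) H le_rfl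
  refine ⟨S, h1, h2, ?_⟩
  have hne : Nonempty (Fin n) := ⟨⟨0, by omega⟩⟩
  have hq : Nonempty (orbitRel.Quotient H (Fin n)) := ⟨Quotient.mk'' ⟨0, by omega⟩⟩
  have h4 : 1 ≤ Nat.card (orbitRel.Quotient H (Fin n)) := Nat.card_pos
  simp only [Nat.card_eq_fintype_card, Fintype.card_fin] at h3
  omega
end
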